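/- Let l_d : Matrix(n,n,ℝ) → ℝ be differentiable, N ≥ 2, and for each k ∈ {0,…,N−1} let f_k^-, f_k^+ be linear functionals on n×n matrices (discrete control forces in 𝔤*). Let (g_0,…,g_N) be invertible matrices with W_k = g_k^{-1} g_{k+1}. Then the discrete Lagrange–d'Alembert principle for Lie groups holds — namely, for every family of differentiable curves g_k(ε) of invertible matrices with g_k(0) = g_k, endpoints g_0, g_N fixed, and η_k = g_k^{-1}(dg_k/dε)(0), one has d/dε|_{ε=0} Σ_{k=0}^{N-1} l_d(W_k(ε)) + Σ_{k=0}^{N-1} (f_k^-(η_k) + f_k^+(η_{k+1})) = 0 — if and only if the controlled discrete Euler–Poincaré equations hold: for every k ∈ {1,…,N−1} and every matrix η, D l_d(W_{k-1})[W_{k-1} η] − D l_d(W_k)[η W_k] + f_{k-1}^+(η) + f_k^-(η) = 0. -/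

import Mathlib

attribute [local instance]
  Matrix.linftyOpNormedAddCommGroup Matrix.linftyOpNormedRing Matrix.linftyOpNormedAlgebra

open Matrix in
lemma key_term_deriv {n : ℕ} (ld : Matrix (Fin n) (Fin n) ℝ → ℝ) (hld : Differentiable ℝ ld)
    (u v : ℝ → Matrix (Fin n) (Fin n) ℝ)
    (hu : DifferentiableAt ℝ u 0) (hv : DifferentiableAt ℝ v 0)
    (hu0 : IsUnit (u 0)) (hv0 : IsUnit (v 0)) :
    HasDerivAt (fun ε => ld ((u ε)⁻¹ * v ε))
      (fderiv ℝ ld ((u 0)⁻¹ * v 0)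
        (((u 0)⁻¹ * v 0) * ((v 0)⁻¹ * deriv v 0)
          - ((u 0)⁻¹ * deriv u 0) * ((u 0)⁻¹ * v 0))) 0 := by
  have hdetu : IsUnit (u 0).det := (isUnit_iff_isUnit_det _).mp hu0
  have hdetv : IsUnit (v 0).det := (isUnit_iff_isUnit_det _).mp hv0
  have hinv : HasDerivAt (fun ε => (u ε)⁻¹)
      (-((u 0)⁻¹ * deriv u 0 * (u 0)⁻¹)) 0 := by
    simp only [Matrix.nonsing_inv_eq_ringInverse]
    have h1 := (hasFDerivAt_ringInverse (𝕜 := ℝ) hu0.unit)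
    rw [hu0.unit_spec] at h1
    have h2 := h1.comp_hasDerivAt 0 hu.hasDerivAt
    refine h2.congr_deriv ?_
    have hc : (↑hu0.unit⁻¹ : Matrix (Fin n) (Fin n) ℝ) = (u 0)⁻¹ := by
      rw [Matrix.coe_units_inv, hu0.unit_spec]
    simp [ContinuousLinearMap.mulLeftRight_apply, hc, ← Matrix.nonsing_inv_eq_ringInverse]
    rfl
  have hprod : HasDerivAt (fun ε => (u ε)⁻¹ * v ε)
      (-((u 0)⁻¹ * deriv u 0 * (u 0)⁻¹) * v 0 + (u 0)⁻¹ * deriv v 0) 0 := by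
    have := hinv.fun_mul hv.hasDerivAt
    rw [neg_mul] at this ⊢
    exact this
  have hcomp := ((hld ((u 0)⁻¹ * v 0)).hasFDerivAt).comp_hasDerivAt 0 hprod
  refine hcomp.congr_deriv ?_
  congr 1
  have h1 : ((u 0)⁻¹ * v 0) * ((v 0)⁻¹ * deriv v 0) = (u 0)⁻¹ * deriv v 0 := by
    rw [show (u 0)⁻¹ * v 0 * ((v 0)⁻¹ * deriv v 0) = (u 0)⁻¹ * (v 0 * (v 0)⁻¹) * deriv v 0 by
      noncomm_ring, Matrix.mul_nonsing_inv _ hdetv, mul_one]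
  have h2 : ((u 0)⁻¹ * deriv u 0) * ((u 0)⁻¹ * v 0) = (u 0)⁻¹ * deriv u 0 * (u 0)⁻¹ * v 0 := by
    noncomm_ring
  rw [h1, h2]
  noncomm_ring

/-- The discrete Lagrange–d'Alembert principle for Lie groups: a sequence
`(g_0, …, g_N)` of invertible matrices with `W_k = g_k⁻¹ g_{k+1}` and discrete control
forces `f_k^∓ ∈ 𝔤*` satisfies, for every variation by differentiable curves of invertible
matrices fixing the endpoints (with `η_k = g_k⁻¹ (dg_k/dε)(0)`),
`d/dε|₀ ∑ l_d(W_k(ε)) + ∑ (f_k^-(η_k) + f_k^+(η_{k+1})) = 0`,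
iff the controlled discrete Euler–Poincaré equations
`Dl_d(W_{k-1})[W_{k-1}η] − Dl_d(W_k)[ηW_k] + f_{k-1}^+(η) + f_k^-(η) = 0` hold for all
interior `k` and all `η`. -/
theorem stmt_11 {n N : ℕ} (hN : 2 ≤ N)
    (ld : Matrix (Fin n) (Fin n) ℝ → ℝ) (hld : Differentiable ℝ ld)
    (fm fp : ℕ → (Matrix (Fin n) (Fin n) ℝ →ₗ[ℝ] ℝ))
    (g : ℕ → Matrix (Fin n) (Fin n) ℝ) (hg : ∀ k, IsUnit (g k)) :
    (∀ gc : ℕ → ℝ → Matrix (Fin n) (Fin n) ℝ,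
      (∀ k, Differentiable ℝ (gc k)) →
      (∀ k ε, IsUnit (gc k ε)) →
      (∀ k, gc k 0 = g k) →
      (∀ ε, gc 0 ε = g 0) →
      (∀ ε, gc N ε = g N) →
      deriv (fun ε => ∑ k ∈ Finset.range N, ld ((gc k ε)⁻¹ * gc (k + 1) ε)) 0
        + ∑ k ∈ Finset.range N,
            (fm k ((g k)⁻¹ * deriv (gc k) 0)
              + fp k ((g (k + 1))⁻¹ * deriv (gc (k + 1)) 0)) = 0)
    ↔
    (∀ k : ℕ, 1 ≤ k → k ≤ N - 1 → ∀ η : Matrix (Fin n) (Fin n) ℝ,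
      fderiv ℝ ld ((g (k - 1))⁻¹ * g k) (((g (k - 1))⁻¹ * g k) * η)
        - fderiv ℝ ld ((g k)⁻¹ * g (k + 1)) (η * ((g k)⁻¹ * g (k + 1)))
        + fp (k - 1) η + fm k η = 0) := by
  classical
  have hdet : ∀ j, IsUnit (g j).det := fun j => (Matrix.isUnit_iff_isUnit_det _).mp (hg j)
  constructor
  · -- variational principle ⇒ Euler–Poincaré
    intro hvar k hk1 hk2 η
    have hkN : k < N := by omega
    have hk1N : k - 1 < N := by omega
    have hks : k - 1 + 1 = k := by omega
    set gc : ℕ → ℝ → Matrix (Fin n) (Fin n) ℝ :=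
      fun j ε => if j = k then g k * NormedSpace.exp (ε • η) else g j with hgc
    have hEdiff : Differentiable ℝ (fun ε : ℝ => NormedSpace.exp (ε • η)) :=
      fun t => (hasDerivAt_exp_smul_const η t).differentiableAt
    have hdiff : ∀ j, Differentiable ℝ (gc j) := by
      intro j
      by_cases h : j = k
      · simp only [hgc, h, if_pos rfl]
        exact hEdiff.const_mul (g k)
      · simpa [hgc, h] using differentiable_const (g j)
    have hunit : ∀ j ε, IsUnit (gc j ε) := by
      intro j ε
      by_cases h : j = k
      · simpa [hgc, h] using (hg k).mul (Matrix.isUnit_exp _)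
      · simpa [hgc, h] using hg j
    have h0 : ∀ j, gc j 0 = g j := by
      intro j
      by_cases h : j = k <;> simp [hgc, h, NormedSpace.exp_zero]
    have hstart : ∀ ε, gc 0 ε = g 0 := by
      intro ε; simp [hgc, show (0:ℕ) ≠ k by omega]
    have hend : ∀ ε, gc N ε = g N := by
      intro ε; simp [hgc, show N ≠ k by omega]
    have hderiv : ∀ j, deriv (gc j) 0 = if j = k then g k * η else 0 := by
      intro j
      by_cases h : j = k
      · have := HasDerivAt.const_mul (g k) (hasDerivAt_exp_smul_const η (0:ℝ))
        have h2 : deriv (fun ε : ℝ => g k * NormedSpace.exp (ε • η)) 0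
            = g k * (NormedSpace.exp ((0:ℝ) • η) * η) := this.deriv
        simp only [hgc, h, if_pos rfl]
        simp [h2, NormedSpace.exp_zero]
      · simp [hgc, h]
        exact deriv_const _ _
    have hη : ∀ j, (g j)⁻¹ * deriv (gc j) 0 = if j = k then η else 0 := by
      intro j
      rw [hderiv j]
      by_cases h : j = k
      · simp [h, ← mul_assoc, Matrix.nonsing_inv_mul _ (hdet k)]
      · simp [h]
    set D : ℕ → ℝ := fun j =>
      fderiv ℝ ld ((g j)⁻¹ * g (j + 1))
        (((g j)⁻¹ * g (j + 1)) * (if j + 1 = k then η else 0)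
          - (if j = k then η else 0) * ((g j)⁻¹ * g (j + 1))) with hD
    have hkey : ∀ j ∈ Finset.range N,
        HasDerivAt (fun ε => ld ((gc j ε)⁻¹ * gc (j + 1) ε)) (D j) 0 := by
      intro j _
      have h := key_term_deriv ld hld (gc j) (gc (j + 1)) ((hdiff j) 0) ((hdiff (j + 1)) 0)
        (by rw [h0 j]; exact hg j) (by rw [h0 (j + 1)]; exact hg (j + 1))
      rw [h0 j, h0 (j + 1), hη j, hη (j + 1)] at h
      exact h
    have hsum := HasDerivAt.fun_sum hkey
    have hmain := hvar gc hdiff hunit h0 hstart hend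
    rw [hsum.deriv] at hmain
    simp only [hη] at hmain
    have hS1 : ∑ j ∈ Finset.range N, D j
        = fderiv ℝ ld ((g (k-1))⁻¹ * g k) (((g (k-1))⁻¹ * g k) * η)
          - fderiv ℝ ld ((g k)⁻¹ * g (k+1)) (η * ((g k)⁻¹ * g (k+1))) := by
      have hsplit : ∀ j, D j
          = fderiv ℝ ld ((g j)⁻¹ * g (j + 1))
              (((g j)⁻¹ * g (j + 1)) * (if j + 1 = k then η else 0))
            - fderiv ℝ ld ((g j)⁻¹ * g (j + 1))
              ((if j = k then η else 0) * ((g j)⁻¹ * g (j + 1))) := by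
        intro j; rw [hD]; simp [map_sub]
      simp only [hsplit]
      rw [Finset.sum_sub_distrib]
      congr 1
      · rw [Finset.sum_eq_single (k - 1)]
        · simp [hks]
        · intro b _ hb
          have : b + 1 ≠ k := by omega
          simp [this]
        · intro h; exact absurd (Finset.mem_range.mpr hk1N) h
      · rw [Finset.sum_eq_single k]
        · simp
        · intro b _ hb; simp [hb]
        · intro h; exact absurd (Finset.mem_range.mpr hkN) h
    have hS2 : ∑ j ∈ Finset.range N,
        (fm j (if j = k then η else 0) + fp j (if j + 1 = k then η else 0))
        = fm k η + fp (k - 1) η := by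
      rw [Finset.sum_add_distrib]
      congr 1
      · rw [Finset.sum_eq_single k]
        · simp
        · intro b _ hb; simp [hb]
        · intro h; exact absurd (Finset.mem_range.mpr hkN) h
      · rw [Finset.sum_eq_single (k - 1)]
        · simp [hks]
        · intro b _ hb
          have : b + 1 ≠ k := by omega
          simp [this]
        · intro h; exact absurd (Finset.mem_range.mpr hk1N) h
    rw [hS1, hS2] at hmain
    linarith [hmain]
  · -- Euler–Poincaré ⇒ variational principle
    intro hEP gc hdiff hunit h0 hstart hend
    obtain ⟨M, rfl⟩ : ∃ M, N = M + 1 := ⟨N - 1, by omega⟩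
    have hM : 1 ≤ M := by omega
    set η : ℕ → Matrix (Fin n) (Fin n) ℝ := fun j => (g j)⁻¹ * deriv (gc j) 0 with hηdef
    have hη0 : η 0 = 0 := by
      have : gc 0 = fun _ => g 0 := funext hstart
      simp [hηdef, this]
      exact mul_eq_zero_of_right _ (deriv_const _ _)
    have hηN : η (M + 1) = 0 := by
      have : gc (M + 1) = fun _ => g (M + 1) := funext hend
      simp [hηdef, this]
      exact mul_eq_zero_of_right _ (deriv_const _ _)
    set D : ℕ → ℝ := fun j =>
      fderiv ℝ ld ((g j)⁻¹ * g (j + 1))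
        (((g j)⁻¹ * g (j + 1)) * η (j + 1) - η j * ((g j)⁻¹ * g (j + 1))) with hD
    have hkey : ∀ j ∈ Finset.range (M + 1),
        HasDerivAt (fun ε => ld ((gc j ε)⁻¹ * gc (j + 1) ε)) (D j) 0 := by
      intro j _
      have h := key_term_deriv ld hld (gc j) (gc (j + 1)) ((hdiff j) 0) ((hdiff (j + 1)) 0)
        (by rw [h0 j]; exact hg j) (by rw [h0 (j + 1)]; exact hg (j + 1))
      rw [h0 j, h0 (j + 1)] at h
      exact h
    have hsum := HasDerivAt.fun_sum hkey
    rw [hsum.deriv]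
    have hforce : ∀ j, fm j ((g j)⁻¹ * deriv (gc j) 0)
        + fp j ((g (j+1))⁻¹ * deriv (gc (j+1)) 0) = fm j (η j) + fp j (η (j + 1)) := by
      intro j; rfl
    simp only [hforce]
    -- regroup the total sum
    have hterm : ∀ j, D j + (fm j (η j) + fp j (η (j + 1)))
        = (fderiv ℝ ld ((g j)⁻¹ * g (j + 1)) (((g j)⁻¹ * g (j + 1)) * η (j + 1))
            + fp j (η (j + 1)))
          + (fm j (η j) - fderiv ℝ ld ((g j)⁻¹ * g (j + 1)) (η j * ((g j)⁻¹ * g (j + 1)))) := by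
      intro j; rw [hD]; simp [map_sub]; ring
    set C : ℕ → ℝ := fun m =>
      fderiv ℝ ld ((g (m - 1))⁻¹ * g m) (((g (m - 1))⁻¹ * g m) * η m) + fp (m - 1) (η m)
      with hC
    set B : ℕ → ℝ := fun m =>
      fm m (η m) - fderiv ℝ ld ((g m)⁻¹ * g (m + 1)) (η m * ((g m)⁻¹ * g (m + 1))) with hB
    have htotal : ∑ j ∈ Finset.range (M + 1), D j
        + ∑ j ∈ Finset.range (M + 1), (fm j (η j) + fp j (η (j + 1)))
        = ∑ j ∈ Finset.range (M + 1), (C (j + 1) + B j) := by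
      rw [← Finset.sum_add_distrib]
      refine Finset.sum_congr rfl fun j _ => ?_
      rw [hterm j, hC, hB]
      simp
    rw [htotal]
    rw [Finset.sum_add_distrib]
    rw [Finset.sum_range_succ (fun j => C (j + 1)) M, Finset.sum_range_succ' B M]
    have hCN : C (M + 1) = 0 := by simp [hC, hηN]
    have hB0 : B 0 = 0 := by simp [hB, hη0]
    rw [hCN, hB0]
    have : ∑ j ∈ Finset.range M, C (j + 1) + ∑ j ∈ Finset.range M, B (j + 1) = 0 := by
      rw [← Finset.sum_add_distrib]
      refine Finset.sum_eq_zero fun j hj => ?_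
      have hj' : j < M := Finset.mem_range.mp hj
      have hEPj := hEP (j + 1) (by omega) (by omega) (η (j + 1))
      simp only [Nat.add_sub_cancel] at hEPj
      rw [hC, hB]
      simp only [Nat.add_sub_cancel]
      linarith [hEPj]
    linarith [this]
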